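/- Let S, T be trees and U a full face of S (i.e. a subtree of S containing all broad relations of S among its edges). Then U ⊗ T is a full sub-broad poset of S ⊗ T: every broad relation (s_1,t_1)⋯(s_n,t_n) ≤ (s,t) of S ⊗ T with all s_i and s in U already holds in U ⊗ T. -/

import Mathlib

universe u

namespace BroadPaper

/-- A broad relation on `X`: a relation between finite unordered tuples
(multisets) over `X` and elements of `X`. -/
abbrev Rel (X : Type u) : Type u := Multiset X → X → Prop

variable {X : Type u} {Y : Type u} {A : Type u} {B : Type u} {Z : Type u}

/-- Broad transitivity: if `f₁ ⋯ fₙ ≤ e` and `g̲ᵢ ≤ fᵢ` then `g̲₁ ⋯ g̲ₙ ≤ e`,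
encoded via a multiset of pairs `(g̲ᵢ, fᵢ)`. -/
def BTrans (r : Rel X) : Prop :=
  ∀ (p : Multiset (Multiset X × X)) (e : X),
    r (p.map Prod.snd) e → (∀ q ∈ p, r q.1 q.2) → r ((p.map Prod.fst).sum) e

/-- A pre-broad poset: reflexivity plus broad transitivity. -/
def IsPreBroad (r : Rel X) : Prop := (∀ e : X, r {e} e) ∧ BTrans r

/-- A (commutative) broad poset: a pre-broad poset satisfying antisymmetry. -/
def IsBroad (r : Rel X) : Prop :=
  IsPreBroad r ∧ ∀ e f : X, r {e} f → r {f} e → e = f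

/-- Simplicity: letters in any broad relation are pairwise distinct. -/
def Simple (r : Rel X) : Prop := ∀ fs e, r fs e → fs.Nodup

/-- The descendant relation `f ≤_d e`. -/
def descends (r : Rel X) (f e : X) : Prop := ∃ fs, r fs e ∧ f ∈ fs

def Comparable (r : Rel X) (f g : X) : Prop := descends r f g ∨ descends r g f

def Incomp (r : Rel X) (f g : X) : Prop := ¬ descends r f g ∧ ¬ descends r g f

/-- Blockwise extension of a broad relation to a relation between tuples:
`fs ≤ es` iff `fs = f̲₁ ⋯ f̲ₖ`, `es = e₁ ⋯ eₖ` with `f̲ᵢ ≤ eᵢ`. -/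
def tupleLE (r : Rel X) (fs es : Multiset X) : Prop :=
  ∃ p : Multiset (Multiset X × X),
    p.map Prod.snd = es ∧ (p.map Prod.fst).sum = fs ∧ ∀ q ∈ p, r q.1 q.2

/-- A leaf: no tuple strictly below `e`. -/
def IsLeaf (r : Rel X) (e : X) : Prop := ¬ ∃ fs, r fs e ∧ fs ≠ ({e} : Multiset X)

/-- `fs` is the maximum tuple strictly below `e` (written `e^↑`).
If `fs ≠ 0`, `e` is a node; if `fs = 0`, `e` is a stump. -/
def upTuple (r : Rel X) (e : X) (fs : Multiset X) : Prop :=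
  (r fs e ∧ fs ≠ ({e} : Multiset X)) ∧
    ∀ gs, r gs e → gs ≠ ({e} : Multiset X) → tupleLE r gs fs

def IsStump (r : Rel X) (e : X) : Prop := upTuple r e 0

/-- A dendroidally ordered set (tree): a finite simple broad poset in which
every element is a leaf, node or stump, with a `≤_d`-maximum (root). -/
def IsTree (r : Rel X) : Prop :=
  IsBroad r ∧ Finite X ∧ Simple r ∧
    (∀ e : X, IsLeaf r e ∨ ∃ fs, upTuple r e fs) ∧
    ∃ rt : X, ∀ e, descends r e rt

def IsMaxEl (r : Rel X) (e : X) : Prop := ∀ s, descends r e s → s = e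

/-- A forestially ordered set (forest): each element has a unique
`≤_d`-maximal element above it. -/
def IsForest (r : Rel X) : Prop :=
  IsBroad r ∧ Finite X ∧ Simple r ∧
    (∀ e : X, IsLeaf r e ∨ ∃ fs, upTuple r e fs) ∧
    ∀ e : X, ∃! rt : X, IsMaxEl r rt ∧ descends r e rt

/-- A map of broad posets: preserves broad relations (letterwise on tuples). -/
def BroadHom (r : Rel X) (r' : Rel Y) (φ : X → Y) : Prop :=
  ∀ fs e, r fs e → r' (fs.map φ) (φ e)

/-- `rs` is the root tuple: the tuple of `≤_d`-maximal elements (no repeats). -/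
def IsRootTuple (r : Rel X) (rs : Multiset X) : Prop :=
  rs.Nodup ∧ ∀ x, x ∈ rs ↔ IsMaxEl r x

/-- Independent map of forests: `φ(r̲_F)·e̲ ≤ r̲_{F'}` for some tuple `e̲`. -/
def Independent (r : Rel X) (r' : Rel Y) (φ : X → Y) : Prop :=
  ∃ (rs : Multiset X) (rs' : Multiset Y) (es : Multiset Y),
    IsRootTuple r rs ∧ IsRootTuple r' rs' ∧ tupleLE r' (rs.map φ + es) rs'

/-- The (pre-)broad relation generated by a set of generating relations:
closure under reflexivity and broad transitivity. -/
inductive GenRel (gen : Rel X) : Rel X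
  | of : ∀ fs e, gen fs e → GenRel gen fs e
  | refl : ∀ e, GenRel gen {e} e
  | btrans : ∀ (p : Multiset (Multiset X × X)) (e : X),
      GenRel gen (p.map Prod.snd) e → (∀ q ∈ p, GenRel gen q.1 q.2) →
      GenRel gen ((p.map Prod.fst).sum) e

/-- Generators of the tensor product `S ⊗ T`: relations `s̲ × t ≤ (s,t)` and
`s × t̲ ≤ (s,t)`. -/
def tensorGen (rS : Rel A) (rT : Rel B) : Rel (A × B) := fun xs x =>
  (∃ as, rS as x.1 ∧ xs = as.map fun a => (a, x.2)) ∨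
  (∃ bs, rT bs x.2 ∧ xs = bs.map fun b => (x.1, b))

/-- The tensor product broad relation on `A × B`. -/
def tensorRel (rS : Rel A) (rT : Rel B) : Rel (A × B) := GenRel (tensorGen rS rT)

/-- Product of tuples: all pairs from `as` and `bs`. -/
def mprod (as : Multiset A) (bs : Multiset B) : Multiset (A × B) :=
  as.bind fun a => bs.map fun b => (a, b)

end BroadPaper

namespace BroadPaper


section Helpers

variable {X : Type u} {Y : Type u}

theorem mem_sum_map {α β : Type u} {p : Multiset α} {f : α → Multiset β} {x : β} :
    x ∈ (p.map f).sum ↔ ∃ a ∈ p, x ∈ f a := by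
  induction p using Multiset.induction_on with
  | empty => simp
  | cons a s ih => simp [Multiset.sum_cons, ih]

theorem sum_map_singleton' {α : Type u} (s : Multiset α) :
    (s.map fun a => ({a} : Multiset α)).sum = s := by
  induction s using Multiset.induction_on with
  | empty => simp
  | cons a s ih => simp [ih]

theorem sum_eq_zero_mem {α : Type u} {p : Multiset (Multiset α)} (h : p.sum = 0) {q} (hq : q ∈ p) :
    q = 0 := by
  rw [Multiset.sum_eq_zero_iff] at h
  exact h q hq

theorem filter_sum_map {α β : Type u} (p : Multiset α) (f : α → Multiset β) (pr : β → Prop)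
    [DecidablePred pr] :
    ((p.map f).sum).filter pr = (p.map fun a => (f a).filter pr).sum := by
  induction p using Multiset.induction_on with
  | empty => simp
  | cons a s ih => simp [Multiset.filter_add, ih]

theorem map_filter'' {α β : Type u} (f : α → β) (s : Multiset α) (pr : β → Prop)
    [DecidablePred pr] :
    (s.map f).filter pr = (s.filter fun a => pr (f a)).map f := by
  induction s using Multiset.induction_on with
  | empty => simp
  | cons a s ih =>
    by_cases h : pr (f a) <;> simp [h, ih]

theorem multiset_choice {α β : Type u} {p : Multiset α} {Φ : α → β → Prop}
    (h : ∀ x ∈ p, ∃ y, Φ x y) :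
    ∃ w : Multiset (α × β), w.map Prod.fst = p ∧ ∀ z ∈ w, Φ z.1 z.2 := by
  induction p using Multiset.induction_on with
  | empty => exact ⟨0, by simp, by simp⟩
  | cons a s ih =>
    obtain ⟨w, hw1, hw2⟩ := ih (fun x hx => h x (Multiset.mem_cons_of_mem hx))
    obtain ⟨y, hy⟩ := h a (Multiset.mem_cons_self a s)
    refine ⟨(a, y) ::ₘ w, by simp [hw1], ?_⟩
    intro z hz
    rcases Multiset.mem_cons.1 hz with rfl | hz
    · exact hy
    · exact hw2 z hz

theorem map_snd_split {α γ : Type u} {p : Multiset (γ × α)} {A B : Multiset α}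
    (h : p.map Prod.snd = A + B) :
    ∃ p₁ p₂, p = p₁ + p₂ ∧ p₁.map Prod.snd = A ∧ p₂.map Prod.snd = B := by
  classical
  induction A using Multiset.induction_on generalizing p with
  | empty => exact ⟨0, p, by simp, by simp, by simpa using h⟩
  | cons a A ih =>
    have ha : a ∈ p.map Prod.snd := by rw [h]; simp
    obtain ⟨q, hq, hqa⟩ := Multiset.mem_map.1 ha
    have hp : p = q ::ₘ p.erase q := (Multiset.cons_erase hq).symm
    have h2 : (p.erase q).map Prod.snd = A + B := by
      have : p.map Prod.snd = q.2 ::ₘ (p.erase q).map Prod.snd := by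
        rw [hp]; simp
      rw [h, hqa] at this
      have := this.symm
      rwa [show a ::ₘ A + B = a ::ₘ (A + B) by simp [Multiset.cons_add],
        Multiset.cons_inj_right] at this
    obtain ⟨p₁, p₂, hsplit, h1, h2'⟩ := ih h2
    exact ⟨q ::ₘ p₁, p₂, by rw [hp, hsplit]; simp [Multiset.cons_add],
      by simp [h1, hqa], h2'⟩

theorem sum_ite_unique {β : Type u} [DecidableEq β] {V : Multiset β} (pr : β → Prop) [DecidablePred pr] (n : ℕ)
    (hnodup : V.Nodup) {v₀ : β} (hv₀ : v₀ ∈ V) (hpr : pr v₀)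
    (huniq : ∀ v ∈ V, pr v → v = v₀) :
    (V.map fun v => if pr v then n else 0).sum = n := by
  obtain ⟨V', rfl⟩ : ∃ V', V = v₀ ::ₘ V' := ⟨V.erase v₀, (Multiset.cons_erase hv₀).symm⟩
  have hv₀notmem : v₀ ∉ V' := (Multiset.nodup_cons.1 hnodup).1
  simp only [Multiset.map_cons, Multiset.sum_cons, if_pos hpr]
  have : ∀ v ∈ V', ¬ pr v := by
    intro v hv hprv
    exact hv₀notmem (huniq v (Multiset.mem_cons_of_mem hv) hprv ▸ hv)
  have hz : (V'.map fun v => if pr v then n else 0).sum = 0 := by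
    rw [Multiset.sum_eq_zero_iff]
    intro x hx
    obtain ⟨v, hv, rfl⟩ := Multiset.mem_map.1 hx
    simp [this v hv]
  omega

theorem count_sum_map {α β : Type u} [DecidableEq β] (s : Multiset α) (f : α → Multiset β)
    (b : β) :
    Multiset.count b (s.map f).sum = (s.map fun a => Multiset.count b (f a)).sum := by
  induction s using Multiset.induction_on with
  | empty => simp
  | cons a s ih => simp [ih]

theorem partition_by_unique {α β : Type u} {V : Multiset β} {D : Multiset α}
    (rel : α → β → Prop) [DecidableEq α] [DecidableEq β] [∀ a b, Decidable (rel a b)]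
    (hex : ∀ d ∈ D, ∃ v ∈ V, rel d v)
    (huniq : ∀ d ∈ D, ∀ v ∈ V, ∀ v' ∈ V, rel d v → rel d v' → v = v')
    (hnodup : V.Nodup) :
    (V.map fun v => D.filter fun d => rel d v).sum = D := by
  ext a
  rw [count_sum_map]
  by_cases ha : a ∈ D
  · obtain ⟨v₀, hv₀, hrel₀⟩ := hex a ha
    have : (V.map fun v => Multiset.count a (D.filter fun d => rel d v)) =
        V.map fun v => if rel a v then Multiset.count a D else 0 := by
      apply Multiset.map_congr rfl
      intro v hv
      rw [Multiset.count_filter]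
    rw [this]
    rw [sum_ite_unique (fun v => rel a v) _ hnodup hv₀ hrel₀
      (fun v hv hrv => huniq a ha v hv v₀ hv₀ hrv hrel₀)]
  · have hcount : Multiset.count a D = 0 := Multiset.count_eq_zero.2 ha
    rw [hcount]
    rw [Multiset.sum_eq_zero_iff]
    intro x hx
    obtain ⟨v, hv, rfl⟩ := Multiset.mem_map.1 hx
    rw [Multiset.count_filter]
    split
    · exact hcount
    · rfl

end Helpers



section TreeBasics

open scoped Classical

variable {X : Type u} {r : Rel X}

theorem IsTree.reflRel (hr : IsTree r) (e : X) : r {e} e := hr.1.1.1 e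

theorem IsTree.btrans' (hr : IsTree r) {as : Multiset X} {e : X} (h : r as e)
    (p : Multiset (Multiset X × X)) (hp : p.map Prod.snd = as) (hq : ∀ q ∈ p, r q.1 q.2) :
    r (p.map Prod.fst).sum e := hr.1.1.2 p e (by rwa [hp]) hq

theorem IsTree.simple' (hr : IsTree r) : Simple r := hr.2.2.1

theorem IsTree.descends_refl (hr : IsTree r) (e : X) : descends r e e :=
  ⟨{e}, hr.reflRel e, Multiset.mem_singleton_self e⟩

theorem IsTree.subst1 (hr : IsTree r) {gs fs : Multiset X} {e g : X} (hgs : r gs e) (hg : g ∈ gs)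
    (hfs : r fs g) : r (gs.erase g + fs) e := by
  have key := hr.btrans' hgs ((gs.erase g).map (fun x => ({x}, x)) + {(fs, g)}) ?_ ?_
  · have : (((gs.erase g).map (fun x => (({x} : Multiset X), x)) + {(fs, g)}).map Prod.fst).sum
        = gs.erase g + fs := by
      simp [Multiset.map_add, Multiset.sum_add, sum_map_singleton', Function.comp]
    rwa [this] at key
  · have : ((gs.erase g).map (fun x => (({x} : Multiset X), x)) + {(fs, g)}).map Prod.snd
        = gs.erase g + {g} := by
      simp [Multiset.map_add, Function.comp]
    rw [this]
    have h2 := Multiset.cons_erase hg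
    rw [← h2]
    rw [add_comm]
    simp [Multiset.singleton_add]
  · intro q hq
    rcases Multiset.mem_add.1 hq with h1 | h2
    · obtain ⟨x, _, rfl⟩ := Multiset.mem_map.1 h1
      exact hr.reflRel x
    · have : q = (fs, g) := by simpa using h2
      rw [this]; exact hfs

theorem IsTree.descends_trans (hr : IsTree r) {x y z : X} (h1 : descends r x y)
    (h2 : descends r y z) : descends r x z := by
  obtain ⟨fs, hfs, hxf⟩ := h1
  obtain ⟨gs, hgs, hyg⟩ := h2
  exact ⟨_, hr.subst1 hgs hyg hfs, by simp [hxf]⟩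

theorem IsTree.pumping (hr : IsTree r) {gs : Multiset X} {e : X} (h : r gs e) (he : e ∈ gs) :
    gs = {e} := by
  by_contra hne
  have h2 := hr.subst1 h he h
  have hnd := hr.simple' _ _ h2
  have h3 : gs.erase e ≠ 0 := by
    intro h0
    apply hne
    have := Multiset.cons_erase he
    rw [h0] at this
    exact this.symm
  obtain ⟨x, hx⟩ := Multiset.exists_mem_of_ne_zero h3
  have hx2 : x ∈ gs := Multiset.mem_of_mem_erase hx
  have hcount : 2 ≤ Multiset.count x (gs.erase e + gs) := by
    rw [Multiset.count_add]
    have c1 : 1 ≤ Multiset.count x (gs.erase e) := Multiset.one_le_count_iff_mem.2 hx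
    have c2 : 1 ≤ Multiset.count x gs := Multiset.one_le_count_iff_mem.2 hx2
    omega
  have := Multiset.nodup_iff_count_le_one.1 hnd x
  omega

theorem IsTree.descends_antisymm (hr : IsTree r) {x y : X} (h1 : descends r x y)
    (h2 : descends r y x) : x = y := by
  obtain ⟨fs, hfs, hx⟩ := h1
  obtain ⟨gs, hgs, hy⟩ := h2
  have h3 := hr.subst1 hfs hx hgs
  have h4 := hr.pumping h3 (by simp [hy])
  have hcard := congrArg Multiset.card h4
  rw [Multiset.card_add, Multiset.card_singleton] at hcard
  have hg1 : 1 ≤ Multiset.card gs := by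
    rw [Nat.one_le_iff_ne_zero, Ne, Multiset.card_eq_zero]
    intro h0; rw [h0] at hy; simp at hy
  have he0 : fs.erase x = 0 := by
    rw [← Multiset.card_eq_zero]; omega
  have hfs1 : fs = {x} := by
    have := Multiset.cons_erase hx
    rw [he0] at this
    exact this.symm
  have hgs1 : gs = {y} := by
    rw [he0] at h4; simpa using h4
  exact hr.1.2 x y (hfs1 ▸ hfs) (hgs1 ▸ hgs)

theorem IsTree.letters_incomp (hr : IsTree r) {gs : Multiset X} {e a b : X} (h : r gs e)
    (ha : a ∈ gs) (hb : b ∈ gs) (hab : a ≠ b) : ¬ descends r a b := by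
  rintro ⟨fs, hfs, haf⟩
  have h2 := hr.subst1 h hb hfs
  have hnd := hr.simple' _ _ h2
  have haerase : a ∈ gs.erase b := (Multiset.mem_erase_of_ne hab).2 ha
  have hcount : 2 ≤ Multiset.count a (gs.erase b + fs) := by
    rw [Multiset.count_add]
    have c1 : 1 ≤ Multiset.count a (gs.erase b) := Multiset.one_le_count_iff_mem.2 haerase
    have c2 : 1 ≤ Multiset.count a fs := Multiset.one_le_count_iff_mem.2 haf
    omega
  have := Multiset.nodup_iff_count_le_one.1 hnd a
  omega

theorem IsTree.no_common_desc (hr : IsTree r) {gs : Multiset X} {z b₁ b₂ x : X} (h : r gs z)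
    (h1 : b₁ ∈ gs) (h2 : b₂ ∈ gs) (hne : b₁ ≠ b₂) (hx1 : descends r x b₁)
    (hx2 : descends r x b₂) : False := by
  by_cases e1 : x = b₁
  · exact hr.letters_incomp h h1 h2 hne (e1 ▸ hx2)
  by_cases e2 : x = b₂
  · exact hr.letters_incomp h h2 h1 hne.symm (e2 ▸ hx1)
  obtain ⟨fs₁, hf₁, hxf₁⟩ := hx1
  obtain ⟨fs₂, hf₂, hxf₂⟩ := hx2
  have h3 := hr.subst1 h h1 hf₁
  have hb₂' : b₂ ∈ gs.erase b₁ + fs₁ :=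
    Multiset.mem_add.2 (Or.inl ((Multiset.mem_erase_of_ne hne.symm).2 h2))
  have h4 := hr.subst1 h3 hb₂' hf₂
  have hnd := hr.simple' _ _ h4
  have hx1' : x ∈ (gs.erase b₁ + fs₁).erase b₂ :=
    (Multiset.mem_erase_of_ne e2).2 (Multiset.mem_add.2 (Or.inr hxf₁))
  have hcount : 2 ≤ Multiset.count x ((gs.erase b₁ + fs₁).erase b₂ + fs₂) := by
    rw [Multiset.count_add]
    have c1 : 1 ≤ Multiset.count x ((gs.erase b₁ + fs₁).erase b₂) :=
      Multiset.one_le_count_iff_mem.2 hx1'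
    have c2 : 1 ≤ Multiset.count x fs₂ := Multiset.one_le_count_iff_mem.2 hxf₂
    omega
  have := Multiset.nodup_iff_count_le_one.1 hnd x
  omega

theorem IsTree.exists_upTuple_of_rel (hr : IsTree r) {gs : Multiset X} {e : X} (h : r gs e)
    (hne : gs ≠ {e}) : ∃ fs₀, upTuple r e fs₀ := by
  rcases hr.2.2.2.1 e with hleaf | hup
  · exact absurd ⟨gs, h, hne⟩ hleaf
  · exact hup

theorem IsTree.descend_to_child (hr : IsTree r) {x e : X} {fs₀ : Multiset X}
    (hup : upTuple r e fs₀) (hx : descends r x e) (hne : x ≠ e) :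
    ∃ c ∈ fs₀, descends r x c := by
  obtain ⟨gs, hgs, hxg⟩ := hx
  have hgne : gs ≠ {e} := by rintro rfl; exact hne (by simpa using hxg)
  obtain ⟨p, hsnd, hsum, hq⟩ := hup.2 gs hgs hgne
  have hxin : x ∈ (p.map Prod.fst).sum := by rw [hsum]; exact hxg
  obtain ⟨q, hqp, hxq⟩ := mem_sum_map.1 hxin
  exact ⟨q.2, hsnd ▸ Multiset.mem_map_of_mem _ hqp, ⟨q.1, hq q hqp, hxq⟩⟩

theorem IsTree.child_ne (hr : IsTree r) {e : X} {fs₀ : Multiset X} {c : X}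
    (hup : upTuple r e fs₀) (hc : c ∈ fs₀) : c ≠ e :=
  fun h => hup.1.2 (hr.pumping hup.1.1 (h ▸ hc))

theorem IsTree.child_desc (hr : IsTree r) {e : X} {fs₀ : Multiset X} {c : X}
    (hup : upTuple r e fs₀) (hc : c ∈ fs₀) : descends r c e := ⟨fs₀, hup.1.1, hc⟩

theorem IsTree.proper_step (hr : IsTree r) {x e : X} (hx : descends r x e) (hne : x ≠ e) :
    ∃ fs₀, upTuple r e fs₀ ∧ ∃ c ∈ fs₀, descends r x c := by
  obtain ⟨gs, hgs, hxg⟩ := hx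
  have hgne : gs ≠ {e} := by rintro rfl; exact hne (by simpa using hxg)
  obtain ⟨fs₀, hup⟩ := hr.exists_upTuple_of_rel hgs hgne
  exact ⟨fs₀, hup, hr.descend_to_child hup ⟨gs, hgs, hxg⟩ hne⟩

noncomputable def descNum (r : Rel X) (e : X) : ℕ := Set.ncard {x | descends r x e}

theorem IsTree.descNum_lt (hr : IsTree r) {c e : X} (h : descends r c e) (hne : c ≠ e) :
    descNum r c < descNum r e := by
  have : Finite X := hr.2.1
  apply Set.ncard_lt_ncard ?_ (Set.toFinite _)
  rw [Set.ssubset_iff_subset_ne]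
  constructor
  · intro x hx; exact hr.descends_trans hx h
  · intro heq
    have he : e ∈ {x | descends r x e} := hr.descends_refl e
    rw [← heq] at he
    exact hne (hr.descends_antisymm h he)

theorem IsTree.death_down (hr : IsTree r) {e x : X} (h0 : r 0 e) (hx : descends r x e) :
    r 0 x := by
  have key : ∀ n e, descNum r e = n → r 0 e → ∀ x, descends r x e → r 0 x := by
    intro n
    induction n using Nat.strong_induction_on with
    | _ n ih =>
      intro e hn h0 x hx
      by_cases hxe : x = e
      · exact hxe ▸ h0
      obtain ⟨fs₀, hup, c, hc, hxc⟩ := hr.proper_step hx hxe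
      obtain ⟨p, hsnd, hsum, hq⟩ := hup.2 0 h0 (by simp)
      obtain ⟨q₀, hq₀p, hq₀c⟩ := Multiset.mem_map.1 (hsnd ▸ hc : c ∈ p.map Prod.snd)
      have hq₀1 : q₀.1 = 0 := by
        refine sum_eq_zero_mem hsum (Multiset.mem_map_of_mem _ hq₀p)
      have h0c : r 0 c := by rw [← hq₀1, ← hq₀c]; exact hq q₀ hq₀p
      exact ih (descNum r c) (hn ▸ hr.descNum_lt (hr.child_desc hup hc) (hr.child_ne hup hc))
        c rfl h0c x hxc
  exact key _ e rfl h0 x hx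

theorem IsTree.branch (hr : IsTree r) {x y w : X} (hx : descends r x w) (hy : descends r y w) :
    Comparable r x y ∨ ∃ (gs : Multiset X) (z b₁ b₂ : X), r gs z ∧ b₁ ∈ gs ∧ b₂ ∈ gs ∧
      b₁ ≠ b₂ ∧ descends r x b₁ ∧ descends r y b₂ := by
  have key : ∀ n w, descNum r w = n → ∀ x y, descends r x w → descends r y w →
      Comparable r x y ∨ ∃ (gs : Multiset X) (z b₁ b₂ : X), r gs z ∧ b₁ ∈ gs ∧ b₂ ∈ gs ∧
      b₁ ≠ b₂ ∧ descends r x b₁ ∧ descends r y b₂ := by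
    intro n
    induction n using Nat.strong_induction_on with
    | _ n ih =>
      intro w hn x y hx hy
      by_cases hxw : x = w
      · exact Or.inl (Or.inr (hxw ▸ hy))
      by_cases hyw : y = w
      · exact Or.inl (Or.inl (hyw ▸ hx))
      obtain ⟨fs₀, hup, cx, hcx, hxcx⟩ := hr.proper_step hx hxw
      obtain ⟨cy, hcy, hycy⟩ := hr.descend_to_child hup hy hyw
      by_cases hcc : cx = cy
      · exact ih (descNum r cx)
          (hn ▸ hr.descNum_lt (hr.child_desc hup hcx) (hr.child_ne hup hcx)) cx rfl x y
          hxcx (hcc ▸ hycy)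
      · exact Or.inr ⟨fs₀, w, cx, cy, hup.1.1, hcx, hcy, hcc, hxcx, hycy⟩
  exact key _ w rfl x y hx hy

theorem IsTree.linear (hr : IsTree r) {x y z : X} (hxy : descends r x y)
    (hxz : descends r x z) : Comparable r y z := by
  obtain ⟨rt, hrt⟩ := hr.2.2.2.2
  rcases hr.branch (hrt y) (hrt z) with h | ⟨gs, w, b₁, b₂, hgs, hb₁, hb₂, hne, h1, h2⟩
  · exact h
  · exact absurd (hr.descends_trans hxz h2)
      (fun hh => hr.no_common_desc hgs hb₁ hb₂ hne (hr.descends_trans hxy h1) hh)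

theorem IsTree.complement_death (hr : IsTree r) {gs : Multiset X} {e x : X} (h : r gs e)
    (hx : descends r x e) (hinc : ∀ w ∈ gs, ¬ Comparable r x w) : r 0 x := by
  have key : ∀ n e, descNum r e = n → ∀ gs, r gs e → ∀ x, descends r x e →
      (∀ w ∈ gs, ¬ Comparable r x w) → r 0 x := by
    intro n
    induction n using Nat.strong_induction_on with
    | _ n ih =>
      intro e hn gs h x hx hinc
      by_cases hgs0 : gs = 0
      · exact hr.death_down (hgs0 ▸ h) hx
      by_cases hxe : x = e
      · obtain ⟨w, hw⟩ := Multiset.exists_mem_of_ne_zero hgs0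
        exact absurd (Or.inr (hxe ▸ (⟨gs, h, hw⟩ : descends r w e))) (hinc w hw)
      have hgne : gs ≠ {e} := by
        rintro rfl
        exact hinc e (Multiset.mem_singleton_self e) (Or.inl hx)
      obtain ⟨fs₀, hup⟩ := hr.exists_upTuple_of_rel h hgne
      obtain ⟨c, hc, hxc⟩ := hr.descend_to_child hup hx hxe
      obtain ⟨p, hsnd, hsum, hq⟩ := hup.2 gs h hgne
      obtain ⟨q₀, hq₀p, hq₀c⟩ := Multiset.mem_map.1 (hsnd ▸ hc : c ∈ p.map Prod.snd)
      refine ih (descNum r c)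
        (hn ▸ hr.descNum_lt (hr.child_desc hup hc) (hr.child_ne hup hc)) c rfl
        q₀.1 (hq₀c ▸ hq q₀ hq₀p) x hxc ?_
      intro w hw
      apply hinc w
      rw [← hsum]
      exact mem_sum_map.2 ⟨q₀, hq₀p, hw⟩
  exact key _ e rfl gs h x hx hinc

theorem IsTree.restrict (hr : IsTree r) {gs : Multiset X} {e v : X} (h : r gs e)
    (hv : descends r v e) (hyp : ∀ w ∈ gs, descends r v w → descends r w v) :
    r (gs.filter (fun w => descends r w v)) v := by
  have key : ∀ n e, descNum r e = n → ∀ gs, r gs e → ∀ v, descends r v e →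
      (∀ w ∈ gs, descends r v w → descends r w v) →
      r (gs.filter (fun w => descends r w v)) v := by
    intro n
    induction n using Nat.strong_induction_on with
    | _ n ih =>
      intro e hn gs h v hv hyp
      by_cases hve : v = e
      · subst hve
        rw [Multiset.filter_eq_self.2 (fun w hw => ⟨gs, h, hw⟩)]
        exact h
      have hgne : gs ≠ {e} := by
        rintro rfl
        exact hve (hr.descends_antisymm hv (hyp e (Multiset.mem_singleton_self e) hv))
      obtain ⟨fs₀, hup⟩ := hr.exists_upTuple_of_rel h hgne
      obtain ⟨c₀, hc₀, hvc₀⟩ := hr.descend_to_child hup hv hve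
      obtain ⟨p, hsnd, hsum, hq⟩ := hup.2 gs h hgne
      obtain ⟨q₀, hq₀p, hq₀c⟩ := Multiset.mem_map.1 (hsnd ▸ hc₀ : c₀ ∈ p.map Prod.snd)
      have hfs₀nd : fs₀.Nodup := hr.simple' _ _ hup.1.1
      have hnotc₀ : ∀ q ∈ p.erase q₀, q.2 ≠ c₀ := by
        intro q hq' hq2
        have hpe : p = q₀ ::ₘ p.erase q₀ := (Multiset.cons_erase hq₀p).symm
        have : fs₀ = c₀ ::ₘ (p.erase q₀).map Prod.snd := by
          rw [← hsnd, hpe]; simp [hq₀c]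
        rw [this] at hfs₀nd
        exact (Multiset.nodup_cons.1 hfs₀nd).1 (hq2 ▸ Multiset.mem_map_of_mem _ hq')
      have hsub : ∀ q ∈ p, ∀ w ∈ q.1, w ∈ gs := by
        intro q hq' w hw
        rw [← hsum]; exact mem_sum_map.2 ⟨q, hq', hw⟩
      have hdrop : ∀ q ∈ p.erase q₀, q.1.filter (fun w => descends r w v) = 0 := by
        intro q hq'
        rw [Multiset.eq_zero_iff_forall_notMem]
        intro w hw
        rw [Multiset.mem_filter] at hw
        obtain ⟨hw1, hw2⟩ := hw
        have hqp : q ∈ p := Multiset.mem_of_mem_erase hq'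
        have hwq : descends r w q.2 := ⟨q.1, hq q hqp, hw1⟩
        have hq2mem : q.2 ∈ fs₀ := hsnd ▸ Multiset.mem_map_of_mem _ hqp
        rcases hr.linear hw2 hwq with hvq | hqv
        · exact hr.no_common_desc hup.1.1 hc₀ hq2mem (fun hh => hnotc₀ q hq' hh.symm)
            hvc₀ hvq
        · exact hr.letters_incomp hup.1.1 hq2mem hc₀ (hnotc₀ q hq')
            (hr.descends_trans hqv hvc₀)
      have hrec : r (q₀.1.filter (fun w => descends r w v)) v := by
        refine ih (descNum r c₀)
          (hn ▸ hr.descNum_lt (hr.child_desc hup hc₀) (hr.child_ne hup hc₀)) c₀ rfl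
          q₀.1 (hq₀c ▸ hq q₀ hq₀p) v hvc₀ ?_
        intro w hw hvw
        exact hyp w (hsub q₀ hq₀p w hw) hvw
      have hsplit : gs.filter (fun w => descends r w v)
          = q₀.1.filter (fun w => descends r w v) := by
        rw [← hsum, filter_sum_map]
        have hpe : p = q₀ ::ₘ p.erase q₀ := (Multiset.cons_erase hq₀p).symm
        rw [hpe]
        simp only [Multiset.map_cons, Multiset.sum_cons]
        have : ((p.erase q₀).map fun q => q.1.filter (fun w => descends r w v)).sum = 0 := by
          rw [Multiset.sum_eq_zero_iff]
          intro x hx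
          obtain ⟨q, hq', rfl⟩ := Multiset.mem_map.1 hx
          exact hdrop q hq'
        rw [this, add_zero]
      rw [hsplit]
      exact hrec
  exact key _ e rfl gs h v hv hyp

theorem IsTree.build (hr : IsTree r) {e : X} {V : Multiset X} (hnd : V.Nodup)
    (hdesc : ∀ v ∈ V, descends r v e)
    (hanti : ∀ v ∈ V, ∀ v' ∈ V, v ≠ v' → ¬ Comparable r v v')
    (hkill : ∀ x, descends r x e → (∀ v ∈ V, ¬ Comparable r x v) → r 0 x) : r V e := by
  have key : ∀ n e, descNum r e = n → ∀ V : Multiset X, V.Nodup →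
      (∀ v ∈ V, descends r v e) →
      (∀ v ∈ V, ∀ v' ∈ V, v ≠ v' → ¬ Comparable r v v') →
      (∀ x, descends r x e → (∀ v ∈ V, ¬ Comparable r x v) → r 0 x) → r V e := by
    intro n
    induction n using Nat.strong_induction_on with
    | _ n ih =>
      intro e hn V hnd hdesc hanti hkill
      by_cases heV : e ∈ V
      · have hVe : V = {e} := by
          have hall : ∀ v ∈ V, v = e := by
            intro v hv
            by_contra hne
            exact hanti v hv e heV hne (Or.inl (hdesc v hv))
          ext a
          by_cases hae : a = e
          · subst hae
            have h1 : Multiset.count a V ≤ 1 := Multiset.nodup_iff_count_le_one.1 hnd a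
            have h2 : 1 ≤ Multiset.count a V := Multiset.one_le_count_iff_mem.2 heV
            simp; omega
          · have : a ∉ V := fun ha => hae (hall a ha)
            simp [Multiset.count_eq_zero.2 this, hae]
        rw [hVe]; exact hr.reflRel e
      by_cases hV0 : V = 0
      · subst hV0
        exact hkill e (hr.descends_refl e) (by simp)
      obtain ⟨v₀, hv₀⟩ := Multiset.exists_mem_of_ne_zero hV0
      have hv₀e : v₀ ≠ e := fun h => heV (h ▸ hv₀)
      obtain ⟨fs₀, hup, _, _, _⟩ := hr.proper_step (hdesc v₀ hv₀) hv₀e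
      have hchild : ∀ v ∈ V, ∃ c ∈ fs₀, descends r v c := by
        intro v hv
        exact hr.descend_to_child hup (hdesc v hv) (fun h => heV (h ▸ hv))
      have hfs₀nd : fs₀.Nodup := hr.simple' _ _ hup.1.1
      have hVsum : (fs₀.map fun c => V.filter fun v => descends r v c).sum = V := by
        apply partition_by_unique
        · exact hchild
        · intro v hv c hc c' hc' h1 h2
          by_contra hne
          exact hr.no_common_desc hup.1.1 hc hc' hne h1 h2
        · exact hfs₀nd
      have hblocks : ∀ c ∈ fs₀, r (V.filter fun v => descends r v c) c := by
        intro c hc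
        refine ih (descNum r c)
          (hn ▸ hr.descNum_lt (hr.child_desc hup hc) (hr.child_ne hup hc)) c rfl
          _ (Multiset.Nodup.filter _ hnd) ?_ ?_ ?_
        · intro v hv; exact (Multiset.mem_filter.1 hv).2
        · intro v hv v' hv' hne
          exact hanti v (Multiset.mem_filter.1 hv).1 v' (Multiset.mem_filter.1 hv').1 hne
        · intro x hxc hincomp
          apply hkill x (hr.descends_trans hxc (hr.child_desc hup hc))
          intro v hv
          by_cases hvc : v ∈ V.filter fun v => descends r v c
          · exact hincomp v hvc
          · intro hcomp
            have hvnotc : ¬ descends r v c := by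
              intro hd; exact hvc (Multiset.mem_filter.2 ⟨hv, hd⟩)
            rcases hcomp with hxv | hvx
            · rcases hr.linear hxv hxc with hvc' | hcv
              · exact hvnotc hvc'
              · obtain ⟨c', hc', hvc'⟩ := hchild v hv
                by_cases hcc' : c = c'
                · exact hvnotc (hcc' ▸ hvc')
                · exact hr.letters_incomp hup.1.1 hc hc' hcc'
                    (hr.descends_trans hcv hvc')
            · exact hvnotc (hr.descends_trans hvx hxc)
      have := hr.btrans' hup.1.1 (fs₀.map fun c => (V.filter fun v => descends r v c, c))
        (by simp) ?_
      · have hfst : ((fs₀.map fun c => (V.filter fun v => descends r v c, c)).map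
            Prod.fst).sum = V := by
          rw [Multiset.map_map]
          exact hVsum
        rwa [hfst] at this
      · intro q hq'
        obtain ⟨c, hc, rfl⟩ := Multiset.mem_map.1 hq'
        exact hblocks c hc
  exact key _ e rfl V hnd hdesc hanti hkill

end TreeBasics



section Reflection

variable {A : Type u} {B : Type u}

/-- The restriction of a broad relation to a subset. -/
def restRel (rS : Rel A) (P : Set A) : Rel {a : A // a ∈ P} :=
  fun fs e => rS (fs.map Subtype.val) e.val

theorem descends_restRel {rS : Rel A} {P : Set A} {u v : {a : A // a ∈ P}}
    (h : descends (restRel rS P) u v) : descends rS u.val v.val := by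
  obtain ⟨fs, hfs, hu⟩ := h
  exact ⟨fs.map Subtype.val, hfs, Multiset.mem_map_of_mem _ hu⟩

theorem reflection {rS : Rel A} {P : Set A} (hS : IsTree rS) (hU : IsTree (restRel rS P))
    {u v : {a : A // a ∈ P}} (h : descends rS u.val v.val) :
    descends (restRel rS P) u v := by
  by_cases huv : u = v
  · exact huv ▸ hU.descends_refl u
  obtain ⟨rt, hrt⟩ := hU.2.2.2.2
  rcases hU.branch (hrt u) (hrt v) with hcomp | ⟨gs, z, b₁, b₂, hgs, hb₁, hb₂, hne, h1, h2⟩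
  · rcases hcomp with h' | h'
    · exact h'
    · exact absurd (Subtype.ext (hS.descends_antisymm h (descends_restRel h'))) huv
  · exfalso
    refine hS.no_common_desc (x := u.val) hgs (Multiset.mem_map_of_mem Subtype.val hb₁)
      (Multiset.mem_map_of_mem Subtype.val hb₂) ?_ (descends_restRel h1)
      (hS.descends_trans h (descends_restRel h2))
    exact fun hh => hne (Subtype.ext hh)

end Reflection

section TensorTools

variable {A : Type u} {B : Type u} {X : Type u}

theorem GenRel.btrans'' {gen : Rel X} {ms : Multiset X} {e : X} (h : GenRel gen ms e)
    (p : Multiset (Multiset X × X)) (hp : p.map Prod.snd = ms)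
    (hq : ∀ q ∈ p, GenRel gen q.1 q.2) : GenRel gen (p.map Prod.fst).sum e :=
  GenRel.btrans p e (by rwa [hp]) hq

/-- Purely T-side death. -/
inductive TDie (rT : Rel B) : B → Prop
  | mk {bs : Multiset B} {b : B} (h : rT bs b) (hall : ∀ b' ∈ bs, TDie rT b') : TDie rT b

theorem TDie.kill {rT : Rel B} {b : B} (h : TDie rT b) (r' : Rel X) (x : X) :
    tensorRel r' rT 0 (x, b) := by
  induction h with
  | mk hbs hall ih =>
    rename_i bs b
    have hmove : tensorRel r' rT (bs.map fun b' => (x, b')) (x, b) :=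
      GenRel.of _ _ (Or.inr ⟨bs, hbs, rfl⟩)
    have := hmove.btrans'' (bs.map fun b' => ((0 : Multiset (X × B)), (x, b'))) (by
      rw [Multiset.map_map]; rfl) ?_
    · have hz : ((bs.map fun b' => ((0 : Multiset (X × B)), (x, b'))).map Prod.fst).sum
          = (0 : Multiset (X × B)) := by
        rw [Multiset.map_map]
        rw [Multiset.sum_eq_zero_iff]
        intro q hq
        obtain ⟨b', _, rfl⟩ := Multiset.mem_map.1 hq
        rfl
      rwa [hz] at this
    · intro q hq
      obtain ⟨b', hb', rfl⟩ := Multiset.mem_map.1 hq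
      exact ih b' hb'

end TensorTools



section NFSec

variable {A : Type u} {B : Type u}

theorem map_sum_multiset {α β : Type u} (S : Multiset (Multiset α)) (f : α → β) :
    S.sum.map f = (S.map fun s => s.map f).sum := by
  induction S using Multiset.induction_on with
  | empty => simp
  | cons s S ih => simp [ih]

theorem sum_of_sum {α : Type u} (S : Multiset (Multiset (Multiset α))) :
    S.sum.sum = (S.map Multiset.sum).sum := by
  induction S using Multiset.induction_on with
  | empty => simp
  | cons s S ih => simp [ih]

theorem sum_map_fsingleton {α β : Type u} (s : Multiset α) (f : α → β) :
    (s.map fun x => ({f x} : Multiset β)).sum = s.map f := by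
  induction s using Multiset.induction_on with
  | empty => simp
  | cons a s ih => simp [ih]

theorem redistribute {α β γ : Type u} {p : Multiset (γ × α)} {w : Multiset β} {f : β → Multiset α}
    (h : p.map Prod.snd = (w.map f).sum) :
    ∃ W : Multiset (β × Multiset (γ × α)), W.map Prod.fst = w ∧ (W.map Prod.snd).sum = p ∧
      ∀ z ∈ W, z.2.map Prod.snd = f z.1 := by
  induction w using Multiset.induction_on generalizing p with
  | empty =>
    refine ⟨0, by simp, ?_, by simp⟩
    simp only [Multiset.map_zero, Multiset.sum_zero] at h
    rw [Multiset.map_eq_zero] at h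
    simp [h]
  | cons b w' ih =>
    rw [Multiset.map_cons, Multiset.sum_cons] at h
    obtain ⟨p₁, p₂, rfl, h1, h2⟩ := map_snd_split h
    obtain ⟨W', hW1, hW2, hW3⟩ := ih h2
    refine ⟨(b, p₁) ::ₘ W', by simp [hW1], by simp [hW2], ?_⟩
    intro z hz
    rcases Multiset.mem_cons.1 hz with rfl | hz
    · exact h1
    · exact hW3 z hz

/-- Normal forms for tensor relations. Flag `true`: a full normal form below `(a,b)`;
flag `false`: a "block" below a letter `a` at T-coordinate `b`. -/
inductive NF (rS : Rel A) (rT : Rel B) : Bool → A → B → Multiset (A × B) → Prop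
  | mk {a : A} {b : B} (as : Multiset A) (h : rS as a)
      (p : Multiset (Multiset (A × B) × A)) (hp : p.map Prod.snd = as)
      (hq : ∀ q ∈ p, NF rS rT false q.2 b q.1) : NF rS rT true a b (p.map Prod.fst).sum
  | kept {a : A} {b : B} : NF rS rT false a b {(a, b)}
  | split {a : A} {b : B} (bs : Multiset B) (h : rT bs b) (hne : bs ≠ ({b} : Multiset B))
      (w : Multiset (Multiset (A × B) × B)) (hw : w.map Prod.snd = bs)
      (hq : ∀ u ∈ w, NF rS rT true a u.2 u.1) : NF rS rT false a b (w.map Prod.fst).sum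

variable {rS : Rel A} {rT : Rel B}

theorem NF.letters (hS : IsTree rS) (hT : IsTree rT) {fl a b C} (h : NF rS rT fl a b C) :
    ∀ xy ∈ C, descends rS xy.1 a ∧ descends rT xy.2 b := by
  induction h with
  | mk as hrel p hp hq ih =>
    intro xy hxy
    obtain ⟨q, hqp, hxyq⟩ := mem_sum_map.1 hxy
    obtain ⟨h1, h2⟩ := ih q hqp xy hxyq
    exact ⟨hS.descends_trans h1 ⟨as, hrel, hp ▸ Multiset.mem_map_of_mem _ hqp⟩, h2⟩
  | kept =>
    intro xy hxy
    rw [Multiset.mem_singleton] at hxy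
    subst hxy
    exact ⟨hS.descends_refl _, hT.descends_refl _⟩
  | split bs hbs hne w hw hq ih =>
    intro xy hxy
    obtain ⟨u, hup, hxyu⟩ := mem_sum_map.1 hxy
    obtain ⟨h1, h2⟩ := ih u hup xy hxyu
    exact ⟨h1, hT.descends_trans h2 ⟨bs, hbs, hw ▸ Multiset.mem_map_of_mem _ hup⟩⟩

theorem NF.refl' (hS : IsTree rS) (a : A) (b : B) : NF rS rT true a b {(a, b)} := by
  have h := NF.mk (rS := rS) (rT := rT) (b := b) {a} (hS.reflRel a) {({(a, b)}, a)} (by simp) ?_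
  · simpa using h
  · intro q hq
    rw [Multiset.mem_singleton] at hq
    subst hq
    exact NF.kept

theorem NF.smove (hS : IsTree rS) {a : A} {b : B} {as : Multiset A} (h : rS as a)
    (p : Multiset (Multiset (A × B) × A)) (hp : p.map Prod.snd = as)
    (hq : ∀ q ∈ p, NF rS rT true q.2 b q.1) :
    NF rS rT true a b (p.map Prod.fst).sum := by
  classical
  have hchoice : ∀ q ∈ p, ∃ d : Multiset A × Multiset (Multiset (A × B) × A),
      rS d.1 q.2 ∧ d.2.map Prod.snd = d.1 ∧ (∀ z ∈ d.2, NF rS rT false z.2 b z.1) ∧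
      (d.2.map Prod.fst).sum = q.1 := by
    intro q hq'
    have h' := hq q hq'
    generalize hE : q.1 = ms at h'
    cases h' with
    | mk as' hrel' p' hp' hq'' => exact ⟨(as', p'), hrel', hp', hq'', rfl⟩
  obtain ⟨w, hw1, hw2⟩ := multiset_choice hchoice
  set AS : Multiset A := (w.map fun z => z.2.1).sum with hAS
  set PT : Multiset (Multiset (A × B) × A) := (w.map fun z => z.2.2).sum with hPT
  have hrel : rS AS a := by
    have h2 := hS.btrans' h (w.map fun z => (z.2.1, z.1.2)) ?_ ?_
    · rwa [Multiset.map_map] at h2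
    · rw [Multiset.map_map]
      rw [← hp, ← hw1, Multiset.map_map]
      rfl
    · intro q hq'
      obtain ⟨z, hz, rfl⟩ := Multiset.mem_map.1 hq'
      exact (hw2 z hz).1
  have hsnd : PT.map Prod.snd = AS := by
    rw [hPT, map_sum_multiset, Multiset.map_map, hAS]
    congr 1
    apply Multiset.map_congr rfl
    intro z hz
    exact (hw2 z hz).2.1
  have hblocks : ∀ q ∈ PT, NF rS rT false q.2 b q.1 := by
    intro q hqPT
    rw [hPT] at hqPT
    obtain ⟨ms, hms, hqms⟩ := mem_sum_map.1 hqPT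
    exact (hw2 ms hms).2.2.1 q hqms
  have hfinal := NF.mk AS hrel PT hsnd hblocks
  have heq : (PT.map Prod.fst).sum = (p.map Prod.fst).sum := by
    rw [hPT, map_sum_multiset, Multiset.map_map, sum_of_sum, Multiset.map_map]
    rw [← hw1, Multiset.map_map]
    congr 1
    apply Multiset.map_congr rfl
    intro z hz
    exact (hw2 z hz).2.2.2
  rwa [heq] at hfinal

theorem NF.subst (hS : IsTree rS) :
    ∀ {fl : Bool} {a : A} {b : B} {ms : Multiset (A × B)}, NF rS rT fl a b ms →
    ∀ p : Multiset (Multiset (A × B) × (A × B)), p.map Prod.snd = ms →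
    (∀ q ∈ p, NF rS rT true q.2.1 q.2.2 q.1) → NF rS rT true a b (p.map Prod.fst).sum := by
  intro fl a b ms h
  induction h with
  | @kept a b =>
    intro p hp hq
    obtain ⟨q, hpq, hq2⟩ := Multiset.map_eq_singleton.1 hp
    rw [hpq]
    have := hq q (by rw [hpq]; exact Multiset.mem_singleton_self q)
    rw [hq2] at this
    simpa using this
  | @mk a b as hrel p₀ hp₀ hq₀ ih =>
    intro p hp hq
    obtain ⟨W, hW1, hW2, hW3⟩ := redistribute (f := Prod.fst) (hp.trans rfl)
    have hIH : ∀ z ∈ W, NF rS rT true z.1.2 b (z.2.map Prod.fst).sum := by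
      intro z hz
      have hz1 : z.1 ∈ p₀ := by rw [← hW1]; exact Multiset.mem_map_of_mem _ hz
      exact ih z.1 hz1 z.2 (hW3 z hz) (fun q hq' => hq q (by
        rw [← hW2]; exact mem_sum_map.2 ⟨z, hz, hq'⟩))
    have hres := NF.smove (rT := rT) (b := b) hS hrel
      (W.map fun z => ((z.2.map Prod.fst).sum, z.1.2)) ?_ ?_
    · have heq : ((W.map fun z => ((z.2.map Prod.fst).sum, z.1.2)).map Prod.fst).sum
          = (p.map Prod.fst).sum := by
        rw [Multiset.map_map, ← hW2, map_sum_multiset, Multiset.map_map, sum_of_sum,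
          Multiset.map_map]
        rfl
      rwa [heq] at hres
    · rw [Multiset.map_map, ← hp₀, ← hW1, Multiset.map_map]
      rfl
    · intro q hq'
      obtain ⟨z, hz, rfl⟩ := Multiset.mem_map.1 hq'
      exact hIH z hz
  | @split a b bs hbs hne w hw hq₀ ih =>
    intro p hp hq
    obtain ⟨W, hW1, hW2, hW3⟩ := redistribute (f := Prod.fst) (hp.trans rfl)
    have hIH : ∀ z ∈ W, NF rS rT true a z.1.2 (z.2.map Prod.fst).sum := by
      intro z hz
      have hz1 : z.1 ∈ w := by rw [← hW1]; exact Multiset.mem_map_of_mem _ hz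
      exact ih z.1 hz1 z.2 (hW3 z hz) (fun q hq' => hq q (by
        rw [← hW2]; exact mem_sum_map.2 ⟨z, hz, hq'⟩))
    have hblock := NF.split (rS := rS) (a := a) bs hbs hne
      (W.map fun z => ((z.2.map Prod.fst).sum, z.1.2)) ?_ ?_
    · have hmk := NF.mk (rT := rT) (b := b) {a} (hS.reflRel a)
        {((((W.map fun z => ((z.2.map Prod.fst).sum, z.1.2)).map Prod.fst).sum), a)}
        (by simp) ?_
      · have heq : ((W.map fun z => ((z.2.map Prod.fst).sum, z.1.2)).map Prod.fst).sum
            = (p.map Prod.fst).sum := by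
          rw [Multiset.map_map, ← hW2, map_sum_multiset, Multiset.map_map, sum_of_sum,
            Multiset.map_map]
          rfl
        rw [heq] at hmk
        simpa using hmk
      · intro q hq'
        rw [Multiset.mem_singleton] at hq'
        subst hq'
        exact hblock
    · rw [Multiset.map_map, ← hw, ← hW1, Multiset.map_map]
      rfl
    · intro u hu
      obtain ⟨z, hz, rfl⟩ := Multiset.mem_map.1 hu
      exact hIH z hz

theorem tensor_to_NF (hS : IsTree rS) {C : Multiset (A × B)} {x : A × B}
    (h : tensorRel rS rT C x) : NF rS rT true x.1 x.2 C := by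
  induction h with
  | of fs e hgen =>
    rcases hgen with ⟨as, has, rfl⟩ | ⟨bs, hbs, rfl⟩
    · have hmk := NF.mk (rT := rT) (b := e.2) as has
        (as.map fun a' => (({(a', e.2)} : Multiset (A × B)), a')) ?_ ?_
      · have heq : ((as.map fun a' => (({(a', e.2)} : Multiset (A × B)), a')).map
            Prod.fst).sum = as.map fun a' => (a', e.2) := by
          rw [Multiset.map_map]
          exact sum_map_fsingleton as fun a' => (a', e.2)
        rwa [heq] at hmk
      · rw [Multiset.map_map]
        exact Multiset.map_id' as
      · intro q hq
        obtain ⟨a', _, rfl⟩ := Multiset.mem_map.1 hq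
        exact NF.kept
    · by_cases hbt : bs = ({e.2} : Multiset B)
      · subst hbt
        simpa using NF.refl' (rT := rT) hS e.1 e.2
      · have hblock := NF.split (rS := rS) (a := e.1) bs hbs hbt
          (bs.map fun b' => (({(e.1, b')} : Multiset (A × B)), b')) ?_ ?_
        · have hmk := NF.mk (rT := rT) (b := e.2) {e.1} (hS.reflRel e.1)
            {(((bs.map fun b' => (({(e.1, b')} : Multiset (A × B)), b')).map Prod.fst).sum,
              e.1)} (by simp) ?_
          · have heq : ((bs.map fun b' => (({(e.1, b')} : Multiset (A × B)), b')).map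
                Prod.fst).sum = bs.map fun b' => (e.1, b') := by
              rw [Multiset.map_map]
              exact sum_map_fsingleton bs fun b' => (e.1, b')
            rw [heq] at hmk
            simpa using hmk
          · intro q hq
            rw [Multiset.mem_singleton] at hq
            subst hq
            exact hblock
        · rw [Multiset.map_map]
          exact Multiset.map_id' bs
        · intro u hu
          obtain ⟨b', _, rfl⟩ := Multiset.mem_map.1 hu
          exact NF.refl' hS e.1 b'
  | refl e => exact NF.refl' hS e.1 e.2
  | btrans p e hmain hblocks ih ihq =>
    exact NF.subst hS ih p rfl ihq

theorem NF.dead (hS : IsTree rS) {fl a b C} (h : NF rS rT fl a b C) (hC : C = 0) :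
    rS 0 a ∨ TDie rT b := by
  induction h with
  | @mk a b as hrel p hp hq ih =>
    by_cases ht : TDie rT b
    · exact Or.inr ht
    have hall : ∀ q ∈ p, rS (0 : Multiset A) q.2 := by
      intro q hqp
      have hq1 : q.1 = 0 := sum_eq_zero_mem hC (Multiset.mem_map_of_mem _ hqp)
      rcases ih q hqp hq1 with h0 | htd
      · exact h0
      · exact absurd htd ht
    left
    have h2 := hS.btrans' hrel (p.map fun q => ((0 : Multiset A), q.2)) ?_ ?_
    · have hz : ((p.map fun q => ((0 : Multiset A), q.2)).map Prod.fst).sum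
          = (0 : Multiset A) := by
        rw [Multiset.map_map, Multiset.sum_eq_zero_iff]
        intro x hx
        obtain ⟨q, _, rfl⟩ := Multiset.mem_map.1 hx
        rfl
      rwa [hz] at h2
    · rw [Multiset.map_map]
      exact hp
    · intro q hq'
      obtain ⟨q₀, hq₀, rfl⟩ := Multiset.mem_map.1 hq'
      exact hall q₀ hq₀
  | kept => simp at hC
  | @split a b bs hbs hne w hw hq ih =>
    by_cases hsa : rS (0 : Multiset A) a
    · exact Or.inl hsa
    right
    refine TDie.mk hbs ?_
    intro b' hb'
    rw [← hw] at hb'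
    obtain ⟨u, hu, rfl⟩ := Multiset.mem_map.1 hb'
    have hu1 : u.1 = 0 := sum_eq_zero_mem hC (Multiset.mem_map_of_mem _ hu)
    rcases ih u hu hu1 with h0 | ht
    · exact absurd h0 hsa
    · exact ht

end NFSec



section NFRestrict

open scoped Classical

variable {A : Type u} {B : Type u} {rS : Rel A} {rT : Rel B}

theorem sum_map_filter_cases {α γ : Type u} (p : Multiset α) (f g : α → Multiset γ)
    (pr : α → Prop) [DecidablePred pr]
    (h : ∀ q ∈ p, (pr q → f q = g q) ∧ (¬ pr q → f q = 0)) :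
    (p.map f).sum = ((p.filter pr).map g).sum := by
  induction p using Multiset.induction_on with
  | empty => simp
  | cons a s ih =>
    have ha := h a (Multiset.mem_cons_self a s)
    have ihs := ih (fun q hq => h q (Multiset.mem_cons_of_mem hq))
    by_cases hpa : pr a
    · rw [Multiset.map_cons, Multiset.sum_cons, Multiset.filter_cons_of_pos _ hpa,
        Multiset.map_cons, Multiset.sum_cons, ha.1 hpa, ihs]
    · rw [Multiset.map_cons, Multiset.sum_cons, Multiset.filter_cons_of_neg _ hpa,
        ha.2 hpa, zero_add, ihs]

theorem NF.restrict (hS : IsTree rS) (hT : IsTree rT) :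
    ∀ {fl : Bool} {a : A} {b : B} {C : Multiset (A × B)}, NF rS rT fl a b C →
    ∀ v : A, descends rS v a →
    (∀ xy ∈ C, descends rS v xy.1 → v = xy.1) →
    NF rS rT true v b (C.filter fun xy => descends rS xy.1 v) := by
  intro fl a b C h
  induction h with
  | @kept a b =>
    intro v hv habove
    have hva : v = a := habove (a, b) (Multiset.mem_singleton_self _) hv
    subst hva
    rw [Multiset.filter_eq_self.2 ?_]
    · exact NF.refl' hS v b
    · intro xy hxy
      rw [Multiset.mem_singleton] at hxy
      subst hxy
      exact hS.descends_refl v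
  | @split a b bs hbs hne w hw hq ih =>
    intro v hv habove
    have hIH : ∀ u ∈ w, NF rS rT true v u.2 (u.1.filter fun xy => descends rS xy.1 v) := by
      intro u hu
      exact ih u hu v hv (fun xy hxy hd => habove xy (mem_sum_map.2 ⟨u, hu, hxy⟩) hd)
    have hblock := NF.split (rS := rS) (a := v) bs hbs hne
      (w.map fun u => (u.1.filter fun xy => descends rS xy.1 v, u.2)) ?_ ?_
    · have hmk := NF.mk (rT := rT) (b := b) {v} (hS.reflRel v)
        {(((w.map fun u => (u.1.filter fun xy => descends rS xy.1 v, u.2)).map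
          Prod.fst).sum, v)} (by simp) ?_
      · have heq : ((w.map fun u => (u.1.filter fun xy => descends rS xy.1 v, u.2)).map
            Prod.fst).sum
            = ((w.map Prod.fst).sum).filter (fun xy => descends rS xy.1 v) := by
          rw [filter_sum_map, Multiset.map_map]
          congr 1
        rw [heq] at hmk
        simpa using hmk
      · intro q hq'
        rw [Multiset.mem_singleton] at hq'
        subst hq'
        exact hblock
    · rw [Multiset.map_map]
      exact hw
    · intro u hu
      obtain ⟨u₀, hu₀, rfl⟩ := Multiset.mem_map.1 hu
      exact hIH u₀ hu₀
  | @mk a b as hrel p₀ hp₀ hq₀ ih =>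
    intro v hv habove
    by_cases hcase : ∃ a' ∈ as, descends rS v a' ∧ v ≠ a'
    · obtain ⟨a', ha', hva', hvne⟩ := hcase
      obtain ⟨q₀, hq₀p, hq₀a⟩ := Multiset.mem_map.1 (hp₀ ▸ ha' : a' ∈ p₀.map Prod.snd)
      have hasnd : as.Nodup := hS.simple' _ _ hrel
      have hnotq₀ : ∀ q ∈ p₀.erase q₀, q.2 ≠ a' := by
        intro q hq' hq2
        have hpe : p₀ = q₀ ::ₘ p₀.erase q₀ := (Multiset.cons_erase hq₀p).symm
        have hdec : as = a' ::ₘ (p₀.erase q₀).map Prod.snd := by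
          rw [← hp₀, hpe]
          simp [hq₀a]
        rw [hdec] at hasnd
        exact (Multiset.nodup_cons.1 hasnd).1 (hq2 ▸ Multiset.mem_map_of_mem _ hq')
      have hdrop : ∀ q ∈ p₀.erase q₀, q.1.filter (fun xy => descends rS xy.1 v) = 0 := by
        intro q hq'
        rw [Multiset.eq_zero_iff_forall_notMem]
        intro xy hxy
        rw [Multiset.mem_filter] at hxy
        obtain ⟨hxy1, hxy2⟩ := hxy
        have hqp : q ∈ p₀ := Multiset.mem_of_mem_erase hq'
        have hlq : descends rS xy.1 q.2 := ((hq₀ q hqp).letters hS hT xy hxy1).1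
        have hq2mem : q.2 ∈ as := hp₀ ▸ Multiset.mem_map_of_mem _ hqp
        rcases hS.linear hxy2 hlq with h1 | h2
        · exact hS.no_common_desc hrel ha' hq2mem (fun hh => hnotq₀ q hq' hh.symm) hva' h1
        · exact hS.letters_incomp hrel hq2mem ha' (hnotq₀ q hq') (hS.descends_trans h2 hva')
      have hres := ih q₀ hq₀p v (hq₀a ▸ hva')
        (fun xy hxy hd => habove xy (mem_sum_map.2 ⟨q₀, hq₀p, hxy⟩) hd)
      have hsplit : ((p₀.map Prod.fst).sum).filter (fun xy => descends rS xy.1 v)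
          = q₀.1.filter (fun xy => descends rS xy.1 v) := by
        rw [filter_sum_map]
        have hpe : p₀ = q₀ ::ₘ p₀.erase q₀ := (Multiset.cons_erase hq₀p).symm
        rw [hpe, Multiset.map_cons, Multiset.sum_cons]
        have hz : ((p₀.erase q₀).map fun q => q.1.filter fun xy =>
            descends rS xy.1 v).sum = 0 := by
          rw [Multiset.sum_eq_zero_iff]
          intro x hx
          obtain ⟨q, hq', rfl⟩ := Multiset.mem_map.1 hx
          exact hdrop q hq'
        rw [hz, add_zero]
      rw [hsplit]
      exact hres
    · push_neg at hcase
      have hyp' : ∀ w' ∈ as, descends rS v w' → descends rS w' v := by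
        intro w' hw' hd
        have := hcase w' hw' hd
        rw [← this]
        exact hS.descends_refl v
      have hres := hS.restrict hrel hv hyp'
      have hblocks : ∀ q ∈ p₀, (descends rS q.2 v →
          (q.1.filter fun xy => descends rS xy.1 v) = Prod.fst q) ∧
          (¬ descends rS q.2 v → (q.1.filter fun xy => descends rS xy.1 v) = 0) := by
        intro q hqp
        have hq2mem : q.2 ∈ as := hp₀ ▸ Multiset.mem_map_of_mem _ hqp
        constructor
        · intro hd
          apply Multiset.filter_eq_self.2
          intro xy hxy
          exact hS.descends_trans ((hq₀ q hqp).letters hS hT xy hxy).1 hd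
        · intro hnd
          rw [Multiset.eq_zero_iff_forall_notMem]
          intro xy hxy
          rw [Multiset.mem_filter] at hxy
          obtain ⟨hxy1, hxy2⟩ := hxy
          have hlq : descends rS xy.1 q.2 := ((hq₀ q hqp).letters hS hT xy hxy1).1
          rcases hS.linear hxy2 hlq with h1 | h2
          · have := hcase q.2 hq2mem h1
            rw [this] at hnd
            exact hnd (hS.descends_refl q.2)
          · exact hnd h2
      have hmk := NF.mk (rT := rT) (b := b) (as.filter fun w' => descends rS w' v) hres
        (p₀.filter fun q => descends rS q.2 v) ?_ ?_
      · have heq : (((p₀.filter fun q => descends rS q.2 v).map Prod.fst).sum)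
            = ((p₀.map Prod.fst).sum).filter (fun xy => descends rS xy.1 v) := by
          rw [filter_sum_map]
          exact (sum_map_filter_cases p₀ _ Prod.fst _ hblocks).symm
        rw [heq] at hmk
        exact hmk
      · rw [← hp₀, map_filter'']
      · intro q hq'
        exact hq₀ q (Multiset.mem_of_mem_filter hq')

end NFRestrict



section MainSec

open scoped Classical

variable {A : Type u} {B : Type u} {rS : Rel A} {rT : Rel B} {P : Set A}

theorem map_decompose {α β : Type u} {f : α → β} {D : Multiset α} {m1 m2 : Multiset β}
    (h : D.map f = m1 + m2) : ∃ D1 D2, D = D1 + D2 ∧ D1.map f = m1 ∧ D2.map f = m2 := by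
  induction m1 using Multiset.induction_on generalizing D with
  | empty => exact ⟨0, D, by simp, by simp, by simpa using h⟩
  | cons b m1' ih =>
    have hb : b ∈ D.map f := by rw [h]; simp
    obtain ⟨d, hd, hdb⟩ := Multiset.mem_map.1 hb
    have hD : D = d ::ₘ D.erase d := (Multiset.cons_erase hd).symm
    have h2 : (D.erase d).map f = m1' + m2 := by
      have hh : D.map f = f d ::ₘ (D.erase d).map f := by
        conv_lhs => rw [hD]
        simp
      rw [h, hdb] at hh
      rw [show (b ::ₘ m1') + m2 = b ::ₘ (m1' + m2) from by rw [Multiset.cons_add]] at hh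
      exact ((Multiset.cons_inj_right b).1 hh.symm)
    obtain ⟨D1, D2, hsplit, hm1, hm2⟩ := ih h2
    exact ⟨d ::ₘ D1, D2, by rw [hD, hsplit, Multiset.cons_add],
      by simp [hm1, hdb], hm2⟩

theorem exists_preimage_blocks {α β γ : Type u} {f : α → β}
    (w : Multiset (Multiset β × γ)) (D : Multiset α) (h : (w.map Prod.fst).sum = D.map f) :
    ∃ W : Multiset (Multiset α × γ), W.map (fun z => (z.1.map f, z.2)) = w ∧
      (W.map Prod.fst).sum = D := by
  induction w using Multiset.induction_on generalizing D with
  | empty =>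
    refine ⟨0, by simp, ?_⟩
    have h0 : D.map f = 0 := by simpa using h.symm
    rw [Multiset.map_eq_zero] at h0
    simp [h0]
  | cons u w' ih =>
    rw [Multiset.map_cons, Multiset.sum_cons] at h
    obtain ⟨D1, D2, hDs, h1, h2⟩ := map_decompose h.symm
    subst hDs
    obtain ⟨W', hW1, hW2⟩ := ih D2 h2.symm
    refine ⟨(D1, u.2) ::ₘ W', ?_, by simp [hW2]⟩
    rw [Multiset.map_cons, hW1]
    congr 1
    rw [h1]

theorem main_lift (hS : IsTree rS) (hT : IsTree rT)
    (hU : IsTree (restRel rS P)) :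
    ∀ k : ℕ, ∀ m : ℕ, ∀ (t : B) (s : A) (hs : s ∈ P) (D : Multiset ({a : A // a ∈ P} × B)),
      descNum rT t < k → descNum rS s < m →
      NF rS rT true s t (D.map fun y => (y.1.val, y.2)) →
      tensorRel (restRel rS P) rT D (⟨s, hs⟩, t) := by
  intro k
  induction k using Nat.strong_induction_on with
  | _ k ihk =>
  intro m
  induction m using Nat.strong_induction_on with
  | _ m ihm =>
  intro t s hs D hkt hms h
  by_cases hD0 : D = 0
  · subst hD0
    simp only [Multiset.map_zero] at h
    rcases h.dead hS rfl with h0 | htd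
    · have hmove : restRel rS P (0 : Multiset ({a : A // a ∈ P})) ⟨s, hs⟩ := by
        show rS ((0 : Multiset ({a : A // a ∈ P})).map Subtype.val) s
        simpa using h0
      have hh : tensorRel (restRel rS P) rT ((0 : Multiset ({a : A // a ∈ P})).map
          (fun a => (a, t))) (⟨s, hs⟩, t) := GenRel.of _ _ (Or.inl ⟨0, hmove, rfl⟩)
      simpa using hh
    · exact htd.kill _ _
  generalize hC : D.map (fun y => ((y.1.val : A), y.2)) = C at h
  cases h with
  | mk as hrel p₀ hp₀ hq₀ =>
  have horig : NF rS rT true s t (p₀.map Prod.fst).sum := NF.mk as hrel p₀ hp₀ hq₀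
  have hlet : ∀ xy ∈ (p₀.map Prod.fst).sum, descends rS xy.1 s ∧ descends rT xy.2 t :=
    horig.letters hS hT
  have hletstrict : ∀ xy ∈ (p₀.map Prod.fst).sum, xy.1 = s → s ∈ as := by
    intro xy hxy heq
    obtain ⟨q, hqp, hxyq⟩ := mem_sum_map.1 hxy
    have h1 : descends rS xy.1 q.2 := ((hq₀ q hqp).letters hS hT xy hxyq).1
    have hq2 : q.2 ∈ as := hp₀ ▸ Multiset.mem_map_of_mem _ hqp
    have h2 : descends rS q.2 s := ⟨as, hrel, hq2⟩
    have h3 : q.2 = s := hS.descends_antisymm h2 (heq ▸ h1)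
    exact h3 ▸ hq2
  by_cases hsas : s ∈ as
  · -- trivial S-relation: as = {s}
    have hassing : as = {s} := hS.pumping hrel hsas
    have hp₀s : p₀.map Prod.snd = {s} := hp₀.trans hassing
    obtain ⟨q₀, hp₀q, hq₀s⟩ := Multiset.map_eq_singleton.1 hp₀s
    have hsum : (p₀.map Prod.fst).sum = q₀.1 := by rw [hp₀q]; simp
    have hblk : NF rS rT false q₀.2 t q₀.1 := hq₀ q₀ (by rw [hp₀q]; simp)
    rw [hsum] at hC
    generalize hE : q₀.1 = CC at hblk hC
    cases hblk with
    | kept =>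
      -- D.map ι = {(q₀.2, t)} with q₀.2 = s
      rw [hq₀s] at hC
      obtain ⟨d, hDd, hdi⟩ := Multiset.map_eq_singleton.1 hC
      have hd1 : d.1 = (⟨s, hs⟩ : {a : A // a ∈ P}) := by
        apply Subtype.ext
        exact congrArg Prod.fst hdi
      have hd2 : d.2 = t := congrArg Prod.snd hdi
      rw [hDd, show d = ((⟨s, hs⟩ : {a : A // a ∈ P}), t) from Prod.ext hd1 hd2]
      exact GenRel.refl _
    | split bs hbs hne w hw hqw =>
      rw [hq₀s] at hqw
      obtain ⟨W, hW1, hW2⟩ := exists_preimage_blocks w D hC.symm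
      have hblocks : ∀ z ∈ W, tensorRel (restRel rS P) rT z.1 ((⟨s, hs⟩ : {a : A // a ∈ P}), z.2) := by
        intro z hz
        have hzw : ((z.1.map fun y => ((y.1.val : A), y.2)), z.2) ∈ w := by
          rw [← hW1]; exact Multiset.mem_map_of_mem _ hz
        have hnf := hqw _ hzw
        have hz2bs : z.2 ∈ bs := by
          rw [← hw]
          exact Multiset.mem_map_of_mem Prod.snd hzw
        have hz2t : z.2 ≠ t := fun heq => hne (hT.pumping hbs (heq ▸ hz2bs))
        have hlt : descNum rT z.2 < descNum rT t := hT.descNum_lt ⟨bs, hbs, hz2bs⟩ hz2t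
        exact ihk (descNum rT t) hkt (descNum rS s + 1) z.2 s hs z.1 hlt
          (Nat.lt_succ_self _) hnf
      have hmove : tensorRel (restRel rS P) rT
          (bs.map fun b' => ((⟨s, hs⟩ : {a : A // a ∈ P}), b')) (⟨s, hs⟩, t) :=
        GenRel.of _ _ (Or.inr ⟨bs, hbs, rfl⟩)
      have hfin := hmove.btrans''
        (W.map fun z => (z.1, ((⟨s, hs⟩ : {a : A // a ∈ P}), z.2))) ?_ ?_
      · have hsum2 : ((W.map fun z => (z.1, ((⟨s, hs⟩ : {a : A // a ∈ P}), z.2))).map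
            Prod.fst).sum = D := by
          rw [Multiset.map_map]
          exact hW2
        rwa [hsum2] at hfin
      · rw [Multiset.map_map, ← hw, ← hW1, Multiset.map_map, Multiset.map_map]
        rfl
      · intro q hq'
        obtain ⟨z, hz, rfl⟩ := Multiset.mem_map.1 hq'
        exact hblocks z hz
  · -- main geometric case
    haveI : Finite A := hS.2.1
    have hstrict : ∀ xy ∈ (p₀.map Prod.fst).sum, descends rS xy.1 s ∧ xy.1 ≠ s := by
      intro xy hxy
      exact ⟨(hlet xy hxy).1, fun heq => hsas (hletstrict xy hxy heq)⟩
    obtain ⟨d₀, hd₀⟩ := Multiset.exists_mem_of_ne_zero hD0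
    have hd₀C : ((d₀.1.val, d₀.2) : A × B) ∈ (p₀.map Prod.fst).sum := by
      rw [← hC]
      exact Multiset.mem_map_of_mem _ hd₀
    obtain ⟨hsm, hhsm, hu₀m⟩ := reflection hS hU (u := d₀.1) (v := ⟨s, hs⟩)
      (hstrict _ hd₀C).1
    have hsmne : ∀ wv ∈ hsm.map Subtype.val, wv ≠ s := by
      intro wv hwv heq
      have hpump := hS.pumping hhsm (heq ▸ hwv)
      have hmem : d₀.1.val ∈ hsm.map Subtype.val := Multiset.mem_map_of_mem _ hu₀m
      rw [hpump, Multiset.mem_singleton] at hmem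
      exact (hstrict _ hd₀C).2 hmem
    set good : A → Prop := fun v => v ∈ P ∧ descends rS v s ∧ v ≠ s ∧
      ∀ v', v' ∈ P → descends rS v v' → descends rS v' s → v' ≠ s → v' = v with hgood
    have hcover : ∀ wv : A, wv ∈ P → descends rS wv s → wv ≠ s →
        ∃ v, good v ∧ descends rS wv v := by
      intro wv hwvP hwvs hwvne
      have hfin : ({v | v ∈ P ∧ descends rS wv v ∧ descends rS v s ∧ v ≠ s}).Finite :=
        Set.toFinite _
      have hne' : ({v | v ∈ P ∧ descends rS wv v ∧ descends rS v s ∧ v ≠ s}).Nonempty :=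
        ⟨wv, hwvP, hS.descends_refl wv, hwvs, hwvne⟩
      obtain ⟨v, hvmem, hvmax⟩ := Set.Finite.exists_maximalFor (descNum rS) _ hfin hne'
      refine ⟨v, ⟨hvmem.1, hvmem.2.2.1, hvmem.2.2.2, ?_⟩, hvmem.2.1⟩
      intro v' hv'P hvv' hv's hv'ne
      by_contra hne2
      have hv'mem : v' ∈ {v | v ∈ P ∧ descends rS wv v ∧ descends rS v s ∧ v ≠ s} :=
        ⟨hv'P, hS.descends_trans hvmem.2.1 hvv', hv's, hv'ne⟩
      have hlt := hS.descNum_lt hvv' (fun hh => hne2 hh.symm)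
      have := hvmax hv'mem (le_of_lt hlt)
      omega
    have hcovuniq : ∀ wv : A, ∀ v v', good v → good v' → descends rS wv v →
        descends rS wv v' → v = v' := by
      intro wv v v' hv hv' h1 h2
      rcases hS.linear h1 h2 with hcmp | hcmp
      · exact (hv.2.2.2 v' hv'.1 hcmp hv'.2.1 hv'.2.2.1).symm
      · exact hv'.2.2.2 v hv.1 hcmp hv.2.1 hv.2.2.1
    set WS : Multiset A := hsm.map Subtype.val + D.map (fun d => (d.1.val : A)) with hWS
    have hwit : ∀ wv ∈ WS, wv ∈ P ∧ descends rS wv s ∧ wv ≠ s := by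
      intro wv hwv
      rcases Multiset.mem_add.1 hwv with h1 | h2
      · obtain ⟨uu, huu, rfl⟩ := Multiset.mem_map.1 h1
        exact ⟨uu.2, ⟨hsm.map Subtype.val, hhsm, Multiset.mem_map_of_mem _ huu⟩,
          hsmne _ (Multiset.mem_map_of_mem _ huu)⟩
      · obtain ⟨d, hd, rfl⟩ := Multiset.mem_map.1 h2
        have hmem : ((d.1.val, d.2) : A × B) ∈ (p₀.map Prod.fst).sum := by
          rw [← hC]
          exact Multiset.mem_map_of_mem _ hd
        exact ⟨d.1.2, (hstrict _ hmem).1, (hstrict _ hmem).2⟩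
    haveI : Fintype A := Fintype.ofFinite A
    set V : Finset A := Finset.univ.filter (fun v => good v ∧
      ∃ wv ∈ WS, descends rS wv v) with hV
    have hVmem : ∀ v ∈ V.val, good v ∧ ∃ wv ∈ WS, descends rS wv v := by
      intro v hv
      have := Finset.mem_filter.1 hv
      exact this.2
    have hVcov : ∀ wv ∈ WS, ∃ v ∈ V.val, descends rS wv v := by
      intro wv hwv
      obtain ⟨hP, hdsc, hne'⟩ := hwit wv hwv
      obtain ⟨v, hgv, hwvv⟩ := hcover wv hP hdsc hne'
      exact ⟨v, Finset.mem_filter.2 ⟨Finset.mem_univ v, hgv, wv, hwv, hwvv⟩, hwvv⟩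
    have hbuild : rS V.val s := by
      apply hS.build V.nodup (fun v hv => (hVmem v hv).1.2.1) ?_ ?_
      · intro v hv v' hv' hne' hcmp
        rcases hcmp with h1 | h1
        · exact hne' ((hVmem v hv).1.2.2.2 v' (hVmem v' hv').1.1 h1
            (hVmem v' hv').1.2.1 (hVmem v' hv').1.2.2.1).symm
        · exact hne' ((hVmem v' hv').1.2.2.2 v (hVmem v hv).1.1 h1
            (hVmem v hv).1.2.1 (hVmem v hv).1.2.2.1)
      · intro x hx hincomp
        refine hS.complement_death hhsm hx ?_
        intro wv hwv hcmp
        obtain ⟨v, hvV, hwvv⟩ := hVcov wv (Multiset.mem_add.2 (Or.inl hwv))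
        rcases hcmp with h1 | h1
        · exact hincomp v hvV (Or.inl (hS.descends_trans h1 hwvv))
        · rcases hS.linear h1 hwvv with h2 | h2
          · exact hincomp v hvV (Or.inl h2)
          · exact hincomp v hvV (Or.inr h2)
    have hVP : ∀ v ∈ V.val, v ∈ P := fun v hv => (hVmem v hv).1.1
    set Vsub : Multiset ({a : A // a ∈ P}) :=
      V.val.pmap (fun v hv => (⟨v, hv⟩ : {a : A // a ∈ P})) hVP with hVsub
    have hVsubval : Vsub.map Subtype.val = V.val := by
      rw [hVsub, Multiset.map_pmap]
      exact (Multiset.pmap_eq_map _ _ _ _).trans (Multiset.map_id _)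
    have hrelV : restRel rS P Vsub ⟨s, hs⟩ := by
      show rS (Vsub.map Subtype.val) s
      rw [hVsubval]
      exact hbuild
    have hblocks : ∀ v : {a : A // a ∈ P}, v.val ∈ V.val →
        tensorRel (restRel rS P) rT (D.filter fun d => descends rS d.1.val v.val) (v, t) := by
      intro v hv
      have hgv : good v.val := (hVmem _ hv).1
      have habove : ∀ xy ∈ (p₀.map Prod.fst).sum, descends rS v.val xy.1 → v.val = xy.1 := by
        intro xy hxy hd
        have hxyP : xy.1 ∈ P := by
          rw [← hC] at hxy
          obtain ⟨d, _, rfl⟩ := Multiset.mem_map.1 hxy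
          exact d.1.2
        exact (hgv.2.2.2 xy.1 hxyP hd (hstrict xy hxy).1 (hstrict xy hxy).2).symm
      have hNFR := NF.restrict hS hT horig v.val hgv.2.1 habove
      have hfilt : ((p₀.map Prod.fst).sum).filter (fun xy => descends rS xy.1 v.val)
          = (D.filter fun d => descends rS d.1.val v.val).map
            (fun y => ((y.1.val : A), y.2)) := by
        rw [← hC, map_filter'']
      rw [hfilt] at hNFR
      have hvlt : descNum rS v.val < descNum rS s := hS.descNum_lt hgv.2.1 hgv.2.2.1
      have hres := ihm (descNum rS s) hms t v.val v.2 (D.filter fun d =>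
        descends rS d.1.val v.val) hkt hvlt hNFR
      exact hres
    have hmove : tensorRel (restRel rS P) rT (Vsub.map fun v => (v, t)) (⟨s, hs⟩, t) :=
      GenRel.of _ _ (Or.inl ⟨Vsub, hrelV, rfl⟩)
    have hfin := hmove.btrans''
      (Vsub.map fun v => ((D.filter fun d => descends rS d.1.val v.val), (v, t))) ?_ ?_
    · have hVsubnd : Vsub.Nodup := by
        rw [hVsub]
        exact V.nodup.pmap (fun a ha a' ha' hh => congrArg Subtype.val hh)
      have hsum2 : ((Vsub.map fun v =>
          ((D.filter fun d => descends rS d.1.val v.val), (v, t))).map Prod.fst).sum = D := by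
        rw [Multiset.map_map]
        apply partition_by_unique
          (rel := fun (d : {a : A // a ∈ P} × B) (v : {a : A // a ∈ P}) =>
            descends rS d.1.val v.val)
        · intro d hd
          obtain ⟨v, hvV, hdv⟩ := hVcov d.1.val (Multiset.mem_add.2 (Or.inr
            (Multiset.mem_map_of_mem _ hd)))
          refine ⟨⟨v, hVP v hvV⟩, ?_, hdv⟩
          rw [hVsub]
          rw [Multiset.mem_pmap]
          exact ⟨v, hvV, rfl⟩
        · intro d hd v hv v' hv' h1 h2
          apply Subtype.ext
          have hvV : v.val ∈ V.val := by rw [← hVsubval]; exact Multiset.mem_map_of_mem _ hv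
          have hv'V : v'.val ∈ V.val := by
            rw [← hVsubval]; exact Multiset.mem_map_of_mem _ hv'
          exact hcovuniq d.1.val v.val v'.val (hVmem _ hvV).1 (hVmem _ hv'V).1 h1 h2
        · rw [hVsub]
          exact V.nodup.pmap (fun a ha a' ha' hh => congrArg Subtype.val hh)
      rwa [hsum2] at hfin
    · rw [Multiset.map_map]
      rfl
    · intro q hq'
      obtain ⟨v, hv, rfl⟩ := Multiset.mem_map.1 hq'
      refine hblocks v ?_
      rw [← hVsubval]
      exact Multiset.mem_map_of_mem _ hv

end MainSec


/-- If `U` is a full face of `S` (a subset whose restricted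
relation is a tree containing all relations of `S` among its elements), then
`U ⊗ T` is a full sub-broad poset of `S ⊗ T`: every relation of `S ⊗ T`
whose letters and target have first coordinate in `U` holds in `U ⊗ T`. -/
theorem stmt17 {A B : Type u} (rS : Rel A) (rT : Rel B)
    (hS : IsTree rS) (hT : IsTree rT) (P : Set A)
    (hU : IsTree (fun (fs : Multiset {a : A // a ∈ P}) (e : {a : A // a ∈ P}) =>
      rS (fs.map Subtype.val) e.val)) :
    ∀ (xs : Multiset ({a : A // a ∈ P} × B)) (x : {a : A // a ∈ P} × B),
      tensorRel rS rT (xs.map fun y => (y.1.val, y.2)) (x.1.val, x.2) →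
      tensorRel
        (fun (fs : Multiset {a : A // a ∈ P}) (e : {a : A // a ∈ P}) =>
          rS (fs.map Subtype.val) e.val)
        rT xs x := by
  intro xs x h
  have hNF := tensor_to_NF hS h
  have hres := main_lift hS hT hU (descNum rT x.2 + 1) (descNum rS x.1.val + 1)
    x.2 x.1.val x.1.2 xs (Nat.lt_succ_self _) (Nat.lt_succ_self _) hNF
  exact hres

end BroadPaper
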